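/- For the bivariate Student t distribution with ν degrees of freedom and correlation parameter ρ ∈ (-1,1), Kendall's tau equals (2/π) arcsin(ρ). -/

import Mathlib

open MeasureTheory ProbabilityTheory Real Set
open scoped NNReal ENNReal

/-- Kendall's tau of a pair of random variables, computed via an independent copy on
the product space: `τ = E[sign((T₁ - T₁')(T₂ - T₂'))]`. -/
noncomputable def kendallTau {Ω : Type*} [MeasureSpace Ω] (T₁ T₂ : Ω → ℝ) : ℝ :=
  ∫ q : Ω × Ω, Real.sign ((T₁ q.1 - T₁ q.2) * (T₂ q.1 - T₂ q.2))
    ∂((ℙ : Measure Ω).prod (ℙ : Measure Ω))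

/-- Inverse gamma density with shape `ν/2` and scale `ν/2`, vanishing off `(0, ∞)`. -/
noncomputable def invGammaHalfNuDensity (ν x : ℝ) : ℝ :=
  if 0 < x then
    ((ν / 2) ^ (ν / 2) / Real.Gamma (ν / 2)) * x ^ (-(ν / 2) - 1)
      * Real.exp (-(ν / 2) / x)
  else 0

lemma measurable_realSign : Measurable Real.sign := by
  have : Real.sign = fun r : ℝ => if r < 0 then (-1 : ℝ) else if 0 < r then 1 else 0 :=
    funext fun r => rfl
  rw [this]
  exact Measurable.ite (measurableSet_lt measurable_id measurable_const) measurable_const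
    (Measurable.ite (measurableSet_lt measurable_const measurable_id) measurable_const
      measurable_const)

lemma abs_realSign_le (x : ℝ) : |Real.sign x| ≤ 1 := by
  rcases Real.sign_apply_eq x with h | h | h <;> rw [h] <;> norm_num

lemma realSign_pos_mul {c : ℝ} (hc : 0 < c) (x : ℝ) : Real.sign (c * x) = Real.sign x := by
  rcases lt_trichotomy x 0 with h | h | h
  · rw [Real.sign_of_neg h, Real.sign_of_neg (mul_neg_of_pos_of_neg hc h)]
  · simp [h]
  · rw [Real.sign_of_pos h, Real.sign_of_pos (mul_pos hc h)]

lemma integrable_of_bdd_one {α : Type*} [MeasurableSpace α] {μ : Measure α} [IsFiniteMeasure μ]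
    {f : α → ℝ} (hm : AEStronglyMeasurable f μ) (hb : ∀ x, |f x| ≤ 1) : Integrable f μ :=
  (integrable_const (1 : ℝ)).mono' hm (Filter.Eventually.of_forall fun x => by
    simpa using hb x)

lemma ae_ne_real (b : ℝ) : ∀ᵐ x : ℝ ∂volume, x ≠ b := by
  refine ae_iff.mpr ?_
  simp

lemma gaussian_prod_eq :
    (gaussianReal 0 1).prod (gaussianReal 0 1) =
      (volume : Measure (ℝ × ℝ)).withDensity
        (fun p => gaussianPDF 0 1 p.1 * gaussianPDF 0 1 p.2) := by
  refine Measure.prod_eq fun s t hs ht => ?_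
  rw [withDensity_apply _ (hs.prod ht), Measure.volume_eq_prod, ← Measure.prod_restrict,
    lintegral_prod_mul ((measurable_gaussianPDF 0 1).aemeasurable)
      ((measurable_gaussianPDF 0 1).aemeasurable),
    gaussianReal_apply 0 one_ne_zero s, gaussianReal_apply 0 one_ne_zero t]

noncomputable def rotMap (co si : ℝ) : (ℝ × ℝ) →ₗ[ℝ] (ℝ × ℝ) where
  toFun p := (co * p.1 - si * p.2, si * p.1 + co * p.2)
  map_add' p q := by simp only [Prod.fst_add, Prod.snd_add, Prod.mk_add_mk]; exact Prod.ext (by ring) (by ring)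
  map_smul' r p := by
    simp only [Prod.smul_fst, Prod.smul_snd, RingHom.id_apply, Prod.smul_mk, smul_eq_mul]
    exact Prod.ext (by ring) (by ring)

lemma rotMap_det (co si : ℝ) (h : co ^ 2 + si ^ 2 = 1) : LinearMap.det (rotMap co si) = 1 := by
  rw [← LinearMap.det_toMatrix (Module.Basis.finTwoProd ℝ)]
  have : LinearMap.toMatrix (Module.Basis.finTwoProd ℝ) (Module.Basis.finTwoProd ℝ) (rotMap co si) =
      !![co, -si; si, co] := by
    ext i j
    rw [LinearMap.toMatrix_apply]
    fin_cases i <;> fin_cases j <;>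
      simp [rotMap, Module.Basis.coe_finTwoProd_repr, Module.Basis.finTwoProd_zero, Module.Basis.finTwoProd_one]
  rw [this, Matrix.det_fin_two_of]
  linear_combination h

lemma rotMap_map_volume (co si : ℝ) (h : co ^ 2 + si ^ 2 = 1) :
    Measure.map (fun p : ℝ × ℝ => (co * p.1 - si * p.2, si * p.1 + co * p.2))
      (volume : Measure (ℝ × ℝ)) = volume := by
  have : (fun p : ℝ × ℝ => (co * p.1 - si * p.2, si * p.1 + co * p.2)) = ⇑(rotMap co si) := rfl
  rw [this, Measure.map_linearMap_addHaar_eq_smul_addHaar _ (by rw [rotMap_det co si h]; norm_num),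
    rotMap_det co si h]
  simp

lemma rot_preserves_gauss2 (co si : ℝ) (h : co ^ 2 + si ^ 2 = 1) :
    Measure.map (fun p : ℝ × ℝ => (co * p.1 - si * p.2, si * p.1 + co * p.2))
      ((gaussianReal 0 1).prod (gaussianReal 0 1)) =
      (gaussianReal 0 1).prod (gaussianReal 0 1) := by
  have hRm : Measurable (fun p : ℝ × ℝ => (co * p.1 - si * p.2, si * p.1 + co * p.2)) := by
    fun_prop
  have hDm : Measurable (fun p : ℝ × ℝ => gaussianPDF 0 1 p.1 * gaussianPDF 0 1 p.2) := by
    exact ((measurable_gaussianPDF 0 1).comp measurable_fst).mul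
      ((measurable_gaussianPDF 0 1).comp measurable_snd)
  rw [gaussian_prod_eq]
  ext s hs
  rw [Measure.map_apply hRm hs, withDensity_apply _ (hRm hs), withDensity_apply _ hs]
  conv_rhs => rw [← rotMap_map_volume co si h,
    setLIntegral_map hs hDm hRm]
  refine lintegral_congr fun p => ?_
  simp only [gaussianPDF, gaussianPDFReal]
  rw [← ENNReal.ofReal_mul (by positivity), ← ENNReal.ofReal_mul (by positivity)]
  congr 1
  push_cast
  rw [mul_mul_mul_comm, ← Real.exp_add, mul_mul_mul_comm, ← Real.exp_add]
  congr 1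
  rw [Real.exp_eq_exp]
  linear_combination ((p.1 ^ 2 + p.2 ^ 2) / 2) * h

lemma map_lin_comb {a c : ℝ} (ha : 0 < a) (hc : 0 < c) :
    Measure.map (fun p : ℝ × ℝ => a * p.1 - c * p.2)
      ((gaussianReal 0 1).prod (gaussianReal 0 1)) =
      Measure.map (fun x : ℝ => Real.sqrt (a ^ 2 + c ^ 2) * x) (gaussianReal 0 1) := by
  set t := Real.sqrt (a ^ 2 + c ^ 2) with ht
  have ht0 : 0 < t := Real.sqrt_pos.mpr (by positivity)
  have htsq : t ^ 2 = a ^ 2 + c ^ 2 := Real.sq_sqrt (by positivity)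
  set co := a / t with hco
  set si := c / t with hsi
  have h1 : co ^ 2 + si ^ 2 = 1 := by
    rw [hco, hsi, div_pow, div_pow, ← add_div, ← htsq]
    exact div_self (by positivity)
  have hkey : (fun p : ℝ × ℝ => a * p.1 - c * p.2) =
      (fun x : ℝ => t * x) ∘ Prod.fst ∘
        (fun p : ℝ × ℝ => (co * p.1 - si * p.2, si * p.1 + co * p.2)) := by
    funext p
    simp only [Function.comp_apply, hco, hsi]
    field_simp
  have hRm : Measurable (fun p : ℝ × ℝ => (co * p.1 - si * p.2, si * p.1 + co * p.2)) := by
    fun_prop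
  rw [hkey, ← Measure.map_map (by fun_prop) (measurable_fst.comp hRm),
    ← Measure.map_map measurable_fst hRm, rot_preserves_gauss2 co si h1,
    Measure.map_fst_prod]
  simp

lemma measurePreserving_reorder {α β γ δ : Type*} [MeasurableSpace α] [MeasurableSpace β]
    [MeasurableSpace γ] [MeasurableSpace δ] (μ : Measure α) (ν : Measure β) (κ : Measure γ)
    (τ : Measure δ) [SFinite μ] [SFinite ν] [SFinite κ] [SFinite τ] :
    MeasurePreserving (fun z : (α × β) × (γ × δ) => ((z.1.1, z.2.1), (z.1.2, z.2.2)))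
      ((μ.prod ν).prod (κ.prod τ)) ((μ.prod κ).prod (ν.prod τ)) := by
  have h1 : MeasurePreserving (MeasurableEquiv.prodAssoc (α := α) (β := β) (γ := γ × δ))
      ((μ.prod ν).prod (κ.prod τ)) (μ.prod (ν.prod (κ.prod τ))) :=
    measurePreserving_prodAssoc μ ν (κ.prod τ)
  have h2a : MeasurePreserving ((MeasurableEquiv.prodAssoc (α := β) (β := γ) (γ := δ)).symm)
      (ν.prod (κ.prod τ)) ((ν.prod κ).prod τ) :=
    (measurePreserving_prodAssoc ν κ τ).symm _
  have h2b : MeasurePreserving (Prod.map (Prod.swap : β × γ → γ × β) (id : δ → δ))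
      ((ν.prod κ).prod τ) ((κ.prod ν).prod τ) :=
    (Measure.measurePreserving_swap).prod (MeasurePreserving.id τ)
  have h2c : MeasurePreserving (MeasurableEquiv.prodAssoc (α := γ) (β := β) (γ := δ))
      ((κ.prod ν).prod τ) (κ.prod (ν.prod τ)) :=
    measurePreserving_prodAssoc κ ν τ
  have h2 : MeasurePreserving
      (Prod.map (id : α → α)
        (⇑(MeasurableEquiv.prodAssoc) ∘ (Prod.map (Prod.swap : β × γ → γ × β) (id : δ → δ)) ∘
          ⇑(MeasurableEquiv.prodAssoc).symm))
      (μ.prod (ν.prod (κ.prod τ))) (μ.prod (κ.prod (ν.prod τ))) :=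
    (MeasurePreserving.id μ).prod ((h2c.comp h2b).comp h2a)
  have h3 : MeasurePreserving ((MeasurableEquiv.prodAssoc (α := α) (β := γ) (γ := β × δ)).symm)
      (μ.prod (κ.prod (ν.prod τ))) ((μ.prod κ).prod (ν.prod τ)) :=
    (measurePreserving_prodAssoc μ κ (ν.prod τ)).symm _
  have := (h3.comp h2).comp h1
  convert this using 1
  funext z
  rfl

lemma angular_integral (α : ℝ) (h0 : 0 < α) (hπ : α < π) :
    ∫ θ in Set.Ioo (-π) π,
      Real.sign (Real.cos θ * (Real.cos α * Real.cos θ + Real.sin α * Real.sin θ)) =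
      2 * π - 4 * α := by
  have hπ0 := Real.pi_pos
  set β := π - α with hβ
  have hβ0 : 0 < β := by simp [hβ]; linarith
  have hβπ : β < π := by simp [hβ]; linarith
  set g : ℝ → ℝ := fun u => Real.sign (Real.cos α + Real.cos u) with hg
  have hgm : Measurable g := measurable_realSign.comp (by fun_prop)
  have hgi : ∀ a b : ℝ, IntervalIntegrable g volume a b := by
    intro a b
    rw [intervalIntegrable_iff]
    haveI : IsFiniteMeasure (volume.restrict (Set.uIoc a b)) :=
      ⟨by rw [Measure.restrict_apply_univ]; exact measure_Ioc_lt_top⟩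
    exact integrable_of_bdd_one hgm.aestronglyMeasurable.restrict (fun x => abs_realSign_le _)
  have hcosβ : Real.cos β = -Real.cos α := Real.cos_pi_sub α
  -- to interval integral
  have e0 : (∫ θ in Set.Ioo (-π) π,
        Real.sign (Real.cos θ * (Real.cos α * Real.cos θ + Real.sin α * Real.sin θ))) =
      ∫ θ in (-π)..π, Real.sign (Real.cos θ * (Real.cos α * Real.cos θ + Real.sin α * Real.sin θ)) := by
    rw [intervalIntegral.integral_of_le (by linarith), integral_Ioc_eq_integral_Ioo]
  -- pointwise to g (2θ - α)
  have hA : ∀ θ : ℝ, Real.sign (Real.cos θ * (Real.cos α * Real.cos θ + Real.sin α * Real.sin θ)) =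
      g (2 * θ - α) := by
    intro θ
    have h2 : Real.cos θ * (Real.cos α * Real.cos θ + Real.sin α * Real.sin θ) =
        (1/2) * (Real.cos α + Real.cos (2 * θ - α)) := by
      rw [show 2 * θ - α = θ + (θ - α) by ring, Real.cos_add, Real.cos_sub, Real.sin_sub]
      linear_combination (Real.cos α / 2) * Real.sin_sq_add_cos_sq θ
    rw [h2, realSign_pos_mul (by norm_num)]
  -- periodicity
  have hper : Function.Periodic g (2 * π) := fun u => by simp [hg, Real.cos_add_two_pi]
  -- value of the one-period integral
  have hW : ∫ u in (-π)..π, g u = 2 * π - 4 * α := by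
    have split1 : ∫ u in (-π)..π, g u =
        (∫ u in (-π)..(-β), g u) + ((∫ u in (-β)..β, g u) + ∫ u in β..π, g u) := by
      rw [intervalIntegral.integral_add_adjacent_intervals (hgi (-β) β) (hgi β π),
        intervalIntegral.integral_add_adjacent_intervals (hgi (-π) (-β)) (hgi (-β) π)]
    have hmid : ∫ u in (-β)..β, g u = 2 * β := by
      have hae : ∀ᵐ u ∂(volume : Measure ℝ), u ∈ Set.uIoc (-β) β → g u = 1 := by
        filter_upwards [ae_ne_real β] with u hu hmem
        rw [Set.uIoc_of_le (by linarith)] at hmem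
        have h1 : |u| < β := abs_lt.mpr ⟨hmem.1, lt_of_le_of_ne hmem.2 hu⟩
        have h2 : Real.cos β < Real.cos u := by
          rw [← Real.cos_abs u]
          exact Real.cos_lt_cos_of_nonneg_of_le_pi (abs_nonneg u) (by linarith) h1
        exact Real.sign_of_pos (by linarith [hcosβ])
      rw [intervalIntegral.integral_congr_ae hae, intervalIntegral.integral_const]
      simp only [smul_eq_mul]; ring
    have hright : ∫ u in β..π, g u = β - π := by
      have hae : ∀ᵐ u ∂(volume : Measure ℝ), u ∈ Set.uIoc β π → g u = -1 := by
        refine Filter.Eventually.of_forall fun u hmem => ?_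
        rw [Set.uIoc_of_le (by linarith)] at hmem
        have h2 : Real.cos u < Real.cos β :=
          Real.cos_lt_cos_of_nonneg_of_le_pi (by linarith) hmem.2 hmem.1
        exact Real.sign_of_neg (by linarith [hcosβ])
      rw [intervalIntegral.integral_congr_ae hae, intervalIntegral.integral_const]
      simp only [smul_eq_mul]; ring
    have hleft : ∫ u in (-π)..(-β), g u = β - π := by
      have hae : ∀ᵐ u ∂(volume : Measure ℝ), u ∈ Set.uIoc (-π) (-β) → g u = -1 := by
        filter_upwards [ae_ne_real (-β)] with u hu hmem
        rw [Set.uIoc_of_le (by linarith)] at hmem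
        have hu0 : u < 0 := lt_of_le_of_lt hmem.2 (by linarith)
        have h1 : β < |u| := by
          rw [abs_of_neg hu0]
          rcases lt_or_eq_of_le hmem.2 with h | h
          · linarith
          · exact absurd h hu
        have h2 : Real.cos u < Real.cos β := by
          rw [← Real.cos_abs u]
          exact Real.cos_lt_cos_of_nonneg_of_le_pi (by linarith) (by rw [abs_of_neg hu0]; linarith [hmem.1]) h1
        exact Real.sign_of_neg (by linarith [hcosβ])
      rw [intervalIntegral.integral_congr_ae hae, intervalIntegral.integral_const]
      simp only [smul_eq_mul]; ring
    rw [split1, hmid, hright, hleft, hβ]; ring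
  -- assemble
  rw [e0]
  calc ∫ θ in (-π)..π, Real.sign (Real.cos θ * (Real.cos α * Real.cos θ + Real.sin α * Real.sin θ))
      = ∫ θ in (-π)..π, g (2 * θ - α) := by
        exact intervalIntegral.integral_congr fun θ _ => hA θ
    _ = (2 : ℝ)⁻¹ • ∫ u in (2 * (-π) - α)..(2 * π - α), g u := by
        exact intervalIntegral.integral_comp_mul_sub g two_ne_zero α
    _ = 2 * π - 4 * α := by
        have hsplit : ∫ u in (2 * (-π) - α)..(2 * π - α), g u =
            (∫ u in (2 * (-π) - α)..(-α), g u) + ∫ u in (-α)..(2 * π - α), g u :=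
          (intervalIntegral.integral_add_adjacent_intervals (hgi _ _) (hgi _ _)).symm
        have hp1 : ∫ u in (2 * (-π) - α)..(-α), g u = ∫ u in (-π)..π, g u := by
          have h := hper.intervalIntegral_add_eq (2 * (-π) - α) (-π)
          rw [show 2 * (-π) - α + 2 * π = -α by ring, show -π + 2 * π = π by ring] at h
          exact h
        have hp2 : ∫ u in (-α)..(2 * π - α), g u = ∫ u in (-π)..π, g u := by
          have h := hper.intervalIntegral_add_eq (-α) (-π)
          rw [show -α + 2 * π = 2 * π - α by ring, show -π + 2 * π = π by ring] at h
          exact h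
        rw [hsplit, hp1, hp2, hW]
        ring_nf

lemma radial_integral : ∫ r in Set.Ioi (0 : ℝ), r * rexp (-r ^ 2 / 2) = 1 := by
  have h : ∀ x ∈ Set.Ioi (0 : ℝ),
      HasDerivAt (fun r : ℝ => -rexp (-r ^ 2 / 2)) (x * rexp (-x ^ 2 / 2)) x := by
    intro x _
    have h1 : HasDerivAt (fun r : ℝ => -r ^ 2 / 2) (-x) x := by
      have := ((hasDerivAt_pow 2 x).neg).div_const 2
      simpa using this.congr_deriv (by ring)
    have h2 := h1.exp
    have h3 := h2.neg
    exact h3.congr_deriv (by ring)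
  have hint : IntegrableOn (fun x : ℝ => x * rexp (-x ^ 2 / 2)) (Set.Ioi 0) := by
    have := integrableOn_rpow_mul_exp_neg_mul_sq (b := 1/2) (by norm_num) (s := 1) (by norm_num)
    refine this.congr_fun (fun x hx => ?_) measurableSet_Ioi
    dsimp only
    rw [Real.rpow_one]
    ring_nf
  have htend : Filter.Tendsto (fun r : ℝ => -rexp (-r ^ 2 / 2)) Filter.atTop (nhds 0) := by
    have h1 : Filter.Tendsto (fun r : ℝ => r ^ 2 / 2) Filter.atTop Filter.atTop :=
      (Filter.tendsto_pow_atTop two_ne_zero).atTop_div_const (by norm_num)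
    have h2 : Filter.Tendsto (fun r : ℝ => rexp (-(r ^ 2 / 2))) Filter.atTop (nhds 0) :=
      Real.tendsto_exp_neg_atTop_nhds_zero.comp h1
    have h3 := h2.neg
    rw [neg_zero] at h3
    refine h3.congr fun r => ?_
    rw [neg_div]
  have := integral_Ioi_of_hasDerivAt_of_tendsto
    (f := fun r : ℝ => -rexp (-r ^ 2 / 2)) (f' := fun x : ℝ => x * rexp (-x ^ 2 / 2)) (a := 0)
    ((by continuity : Continuous fun r : ℝ => -rexp (-r ^ 2 / 2)).continuousWithinAt) h hint htend
  rw [this]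
  norm_num

lemma core_gauss2 (ρ : ℝ) (hρ : |ρ| < 1) :
    ∫ p : ℝ × ℝ, Real.sign (p.1 * (ρ * p.1 + Real.sqrt (1 - ρ ^ 2) * p.2))
      ∂((gaussianReal 0 1).prod (gaussianReal 0 1)) = (2 / π) * Real.arcsin ρ := by
  obtain ⟨hρ1, hρ2⟩ := abs_lt.mp hρ
  have hπ0 := Real.pi_pos
  set s : ℝ := Real.sqrt (1 - ρ ^ 2) with hs
  have hs0 : 0 < s := Real.sqrt_pos.mpr (by nlinarith)
  set α : ℝ := Real.arccos ρ with hα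
  have h0α : 0 < α := Real.arccos_pos.mpr hρ2
  have hαπ : α < π := by
    rw [hα, Real.arccos_eq_pi_div_two_sub_arcsin]
    have := Real.neg_pi_div_two_lt_arcsin.mpr hρ1
    linarith
  have hcosα : Real.cos α = ρ := Real.cos_arccos (by linarith) (by linarith)
  have hsinα : Real.sin α = s := Real.sin_arccos ρ
  -- convert to Lebesgue integral with density
  rw [gaussian_prod_eq]
  have hd : (fun p : ℝ × ℝ => gaussianPDF 0 1 p.1 * gaussianPDF 0 1 p.2) =
      fun p : ℝ × ℝ =>
        ((((gaussianPDFReal 0 1 p.1).toNNReal * (gaussianPDFReal 0 1 p.2).toNNReal : ℝ≥0)) :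
          ℝ≥0∞) := by
    funext p
    simp only [gaussianPDF, ENNReal.ofReal, ENNReal.coe_mul]
  have hmeasnn : Measurable fun p : ℝ × ℝ =>
      (gaussianPDFReal 0 1 p.1).toNNReal * (gaussianPDFReal 0 1 p.2).toNNReal :=
    Measurable.mul (((measurable_gaussianPDFReal 0 1).comp measurable_fst).real_toNNReal)
      (((measurable_gaussianPDFReal 0 1).comp measurable_snd).real_toNNReal)
  rw [hd, integral_withDensity_eq_integral_smul hmeasnn _]
  have hsmul : ∀ p : ℝ × ℝ,
      (((gaussianPDFReal 0 1 p.1).toNNReal * (gaussianPDFReal 0 1 p.2).toNNReal : ℝ≥0)) •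
        Real.sign (p.1 * (ρ * p.1 + s * p.2)) =
      (gaussianPDFReal 0 1 p.1 * gaussianPDFReal 0 1 p.2) *
        Real.sign (p.1 * (ρ * p.1 + s * p.2)) := by
    intro p
    rw [NNReal.smul_def, NNReal.coe_mul,
      Real.coe_toNNReal _ (gaussianPDFReal_nonneg 0 1 p.1),
      Real.coe_toNNReal _ (gaussianPDFReal_nonneg 0 1 p.2), smul_eq_mul]
  simp_rw [hsmul]
  -- polar coordinates
  rw [← integral_comp_polarCoord_symm
    (fun p : ℝ × ℝ => (gaussianPDFReal 0 1 p.1 * gaussianPDFReal 0 1 p.2) *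
      Real.sign (p.1 * (ρ * p.1 + s * p.2)))]
  have htarget : polarCoord.target = Set.Ioi (0 : ℝ) ×ˢ Set.Ioo (-π) π := rfl
  have hcongr : Set.EqOn
      (fun p : ℝ × ℝ => p.1 • ((gaussianPDFReal 0 1 (polarCoord.symm p).1 *
          gaussianPDFReal 0 1 (polarCoord.symm p).2) *
        Real.sign ((polarCoord.symm p).1 *
          (ρ * (polarCoord.symm p).1 + s * (polarCoord.symm p).2))))
      (fun p : ℝ × ℝ => ((2 * π)⁻¹ * (p.1 * rexp (-p.1 ^ 2 / 2))) *
        Real.sign (Real.cos p.2 * (ρ * Real.cos p.2 + s * Real.sin p.2)))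
      polarCoord.target := by
    rintro ⟨r, θ⟩ hp
    rw [htarget] at hp
    obtain ⟨hr, hθ⟩ := hp
    have hr0 : (0 : ℝ) < r := hr
    have hsymm : polarCoord.symm (r, θ) = (r * Real.cos θ, r * Real.sin θ) := rfl
    dsimp only
    rw [hsymm]
    have hpdf : gaussianPDFReal 0 1 (r * Real.cos θ) * gaussianPDFReal 0 1 (r * Real.sin θ) =
        (2 * π)⁻¹ * rexp (-r ^ 2 / 2) := by
      simp only [gaussianPDFReal, NNReal.coe_one, mul_one, sub_zero]
      have h1 : (Real.sqrt (2 * π))⁻¹ * (Real.sqrt (2 * π))⁻¹ = (2 * π)⁻¹ := by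
        rw [← mul_inv, Real.mul_self_sqrt (by positivity)]
      have h2 : rexp (-(r * Real.cos θ) ^ 2 / 2) * rexp (-(r * Real.sin θ) ^ 2 / 2) =
          rexp (-r ^ 2 / 2) := by
        rw [← Real.exp_add, Real.exp_eq_exp]
        linear_combination (-(r ^ 2) / 2) * Real.sin_sq_add_cos_sq θ
      rw [mul_mul_mul_comm, h1, h2]
    have hsign : Real.sign ((r * Real.cos θ) *
        (ρ * (r * Real.cos θ) + s * (r * Real.sin θ))) =
        Real.sign (Real.cos θ * (ρ * Real.cos θ + s * Real.sin θ)) := by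
      rw [show (r * Real.cos θ) * (ρ * (r * Real.cos θ) + s * (r * Real.sin θ)) =
        (r ^ 2) * (Real.cos θ * (ρ * Real.cos θ + s * Real.sin θ)) by ring]
      exact realSign_pos_mul (by positivity) _
    rw [hpdf, hsign, smul_eq_mul]
    ring
  rw [setIntegral_congr_fun polarCoord.open_target.measurableSet hcongr, htarget,
    Measure.volume_eq_prod,
    setIntegral_prod_mul (μ := (volume : Measure ℝ)) (ν := (volume : Measure ℝ))
      (fun r : ℝ => (2 * π)⁻¹ * (r * rexp (-r ^ 2 / 2)))
      (fun θ : ℝ => Real.sign (Real.cos θ * (ρ * Real.cos θ + s * Real.sin θ)))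
      (Set.Ioi 0) (Set.Ioo (-π) π)]
  have hang : (∫ θ in Set.Ioo (-π) π,
      Real.sign (Real.cos θ * (ρ * Real.cos θ + s * Real.sin θ))) = 2 * π - 4 * α := by
    rw [← hcosα, ← hsinα]
    exact angular_integral α h0α hαπ
  have hrad : (∫ r in Set.Ioi (0 : ℝ), (2 * π)⁻¹ * (r * rexp (-r ^ 2 / 2))) = (2 * π)⁻¹ := by
    rw [integral_const_mul, radial_integral, mul_one]
  rw [hang, hrad, Real.arcsin_eq_pi_div_two_sub_arccos, ← hα]
  field_simp
  ring

lemma mid_integral (ρ : ℝ) (hρ : |ρ| < 1) {a c : ℝ} (ha : 0 < a) (hc : 0 < c) :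
    ∫ z : (ℝ × ℝ) × (ℝ × ℝ),
      Real.sign ((a * z.1.1 - c * z.2.1) *
        (ρ * (a * z.1.1 - c * z.2.1) + Real.sqrt (1 - ρ ^ 2) * (a * z.1.2 - c * z.2.2)))
      ∂(((gaussianReal 0 1).prod (gaussianReal 0 1)).prod
        ((gaussianReal 0 1).prod (gaussianReal 0 1))) = (2 / π) * Real.arcsin ρ := by
  set s : ℝ := Real.sqrt (1 - ρ ^ 2) with hs
  set γ : Measure ℝ := gaussianReal 0 1 with hγ
  set t : ℝ := Real.sqrt (a ^ 2 + c ^ 2) with htdef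
  have ht0 : 0 < t := Real.sqrt_pos.mpr (by positivity)
  set ψ : ℝ × ℝ → ℝ := fun p => Real.sign (p.1 * (ρ * p.1 + s * p.2)) with hψ
  have hψm : Measurable ψ := measurable_realSign.comp (by fun_prop)
  set ℓ : ℝ × ℝ → ℝ := fun p => a * p.1 - c * p.2 with hℓ
  have hℓm : Measurable ℓ := by fun_prop
  set σ : (ℝ × ℝ) × (ℝ × ℝ) → (ℝ × ℝ) × (ℝ × ℝ) :=
    fun z => ((z.1.1, z.2.1), (z.1.2, z.2.2)) with hσ
  have hσm : Measurable σ := by fun_prop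
  set L : (ℝ × ℝ) × (ℝ × ℝ) → ℝ × ℝ := Prod.map ℓ ℓ with hL
  have hLm : Measurable L := hℓm.prodMap hℓm
  have hintegrand : (fun z : (ℝ × ℝ) × (ℝ × ℝ) =>
      Real.sign ((a * z.1.1 - c * z.2.1) *
        (ρ * (a * z.1.1 - c * z.2.1) + s * (a * z.1.2 - c * z.2.2)))) =
      fun z => ψ ((L ∘ σ) z) := rfl
  rw [hintegrand, ← integral_map (hLm.comp hσm).aemeasurable hψm.aestronglyMeasurable]
  have hmapσ : Measure.map σ ((γ.prod γ).prod (γ.prod γ)) = (γ.prod γ).prod (γ.prod γ) :=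
    (measurePreserving_reorder γ γ γ γ).map_eq
  have hmapL : Measure.map L ((γ.prod γ).prod (γ.prod γ)) =
      Measure.map (Prod.map (fun x : ℝ => t * x) (fun x : ℝ => t * x)) (γ.prod γ) := by
    rw [hL, ← Measure.map_prod_map _ _ hℓm hℓm, map_lin_comb ha hc, ← htdef,
      Measure.map_prod_map _ _ (by fun_prop) (by fun_prop)]
  rw [← Measure.map_map hLm hσm, hmapσ, hmapL,
    integral_map (by fun_prop) hψm.aestronglyMeasurable]
  have hpt : ∀ p : ℝ × ℝ, ψ (Prod.map (fun x : ℝ => t * x) (fun x : ℝ => t * x) p) = ψ p := by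
    intro p
    show Real.sign ((t * p.1) * (ρ * (t * p.1) + s * (t * p.2))) = _
    rw [show (t * p.1) * (ρ * (t * p.1) + s * (t * p.2)) =
      (t ^ 2) * (p.1 * (ρ * p.1 + s * p.2)) by ring, realSign_pos_mul (by positivity)]
  simp_rw [hpt]
  exact core_gauss2 ρ hρ

/-- For the bivariate Student t distribution with `ν` degrees of freedom
and correlation parameter `ρ ∈ (-1,1)`, realized as `(T₁, T₂) = (√H·Z₁, √H·Z₂)` with
`(Z₁, Z₂)` bivariate standard Gaussian with correlation `ρ` and `H` an independent
inverse gamma variable with shape `ν/2` and scale `ν/2`, Kendall's tau equals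
`(2/π)·arcsin ρ`. -/
theorem kendall_tau_student_t
    {Ω : Type*} [MeasureSpace Ω] [IsProbabilityMeasure (ℙ : Measure Ω)]
    (ν : ℝ) (hν : 0 < ν)
    (B₁ B₂ H : Ω → ℝ)
    (hB₁ : Measurable B₁) (hB₂ : Measurable B₂) (hH : Measurable H)
    (hB₁law : Measure.map B₁ ℙ = gaussianReal 0 1)
    (hB₂law : Measure.map B₂ ℙ = gaussianReal 0 1)
    (hBindep : IndepFun B₁ B₂ ℙ)
    (hHB : IndepFun H (fun ω => (B₁ ω, B₂ ω)) ℙ)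
    (hHlaw : Measure.map H ℙ
      = volume.withDensity (fun x => ENNReal.ofReal (invGammaHalfNuDensity ν x)))
    (ρ : ℝ) (hρ : |ρ| < 1)
    (Z₁ Z₂ T₁ T₂ : Ω → ℝ)
    (hZ₁ : ∀ ω, Z₁ ω = B₁ ω)
    (hZ₂ : ∀ ω, Z₂ ω = ρ * B₁ ω + Real.sqrt (1 - ρ ^ 2) * B₂ ω)
    (hT₁ : ∀ ω, T₁ ω = Real.sqrt (H ω) * Z₁ ω)
    (hT₂ : ∀ ω, T₂ ω = Real.sqrt (H ω) * Z₂ ω) :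
    kendallTau T₁ T₂ = (2 / Real.pi) * Real.arcsin ρ := by
  -- notation
  set γ : Measure ℝ := gaussianReal 0 1 with hγ
  set μH : Measure ℝ :=
    volume.withDensity (fun x => ENNReal.ofReal (invGammaHalfNuDensity ν x)) with hμH
  haveI : IsProbabilityMeasure μH := hHlaw ▸ Measure.isProbabilityMeasure_map hH.aemeasurable
  -- a.e. positivity of H
  have hpos : μH {x : ℝ | ¬ 0 < x} = 0 := by
    have hset : {x : ℝ | ¬ 0 < x} = Set.Iic 0 := by ext x; simp [not_lt]
    rw [hμH, hset, withDensity_apply _ measurableSet_Iic,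
      setLIntegral_congr_fun measurableSet_Iic
        (fun x (hx : x ≤ 0) => ?_), lintegral_zero]
    have : ¬ (0 : ℝ) < x := not_lt.mpr hx
    simp [invGammaHalfNuDensity, this]
  -- joint law
  set φ : Ω → ℝ × (ℝ × ℝ) := fun ω => (H ω, (B₁ ω, B₂ ω)) with hφ
  have hφm : Measurable φ := hH.prodMk (hB₁.prodMk hB₂)
  have hpair : Measure.map (fun ω => (B₁ ω, B₂ ω)) ℙ = γ.prod γ := by
    rw [(indepFun_iff_map_prod_eq_prod_map_map hB₁.aemeasurable hB₂.aemeasurable).mp hBindep,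
      hB₁law, hB₂law]
  have hφlaw : Measure.map φ ℙ = μH.prod (γ.prod γ) := by
    rw [hφ, (indepFun_iff_map_prod_eq_prod_map_map hH.aemeasurable
      (hB₁.prodMk hB₂).aemeasurable).mp hHB, hHlaw, hpair]
  set s : ℝ := Real.sqrt (1 - ρ ^ 2) with hsdef
  -- integrand on the pushforward space
  set F : (ℝ × (ℝ × ℝ)) × (ℝ × (ℝ × ℝ)) → ℝ := fun z =>
    Real.sign ((Real.sqrt z.1.1 * z.1.2.1 - Real.sqrt z.2.1 * z.2.2.1) *
      (Real.sqrt z.1.1 * (ρ * z.1.2.1 + s * z.1.2.2) -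
        Real.sqrt z.2.1 * (ρ * z.2.2.1 + s * z.2.2.2))) with hF
  have hFm : Measurable F := measurable_realSign.comp (by fun_prop)
  set G : (ℝ × ℝ) × ((ℝ × ℝ) × (ℝ × ℝ)) → ℝ := fun w =>
    Real.sign ((Real.sqrt w.1.1 * w.2.1.1 - Real.sqrt w.1.2 * w.2.2.1) *
      (Real.sqrt w.1.1 * (ρ * w.2.1.1 + s * w.2.1.2) -
        Real.sqrt w.1.2 * (ρ * w.2.2.1 + s * w.2.2.2))) with hG
  have hGm : Measurable G := measurable_realSign.comp (by fun_prop)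
  set σmap : (ℝ × (ℝ × ℝ)) × (ℝ × (ℝ × ℝ)) → (ℝ × ℝ) × ((ℝ × ℝ) × (ℝ × ℝ)) :=
    fun z => ((z.1.1, z.2.1), (z.1.2, z.2.2)) with hσ
  have hσm : Measurable σmap := by fun_prop
  have hint : (fun q : Ω × Ω => Real.sign ((T₁ q.1 - T₁ q.2) * (T₂ q.1 - T₂ q.2))) =
      fun q => F (Prod.map φ φ q) := by
    funext q
    rw [hT₁ q.1, hT₁ q.2, hT₂ q.1, hT₂ q.2, hZ₁ q.1, hZ₁ q.2, hZ₂ q.1, hZ₂ q.2]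
    rfl
  have hGint : Integrable G ((μH.prod μH).prod ((γ.prod γ).prod (γ.prod γ))) :=
    integrable_of_bdd_one hGm.aestronglyMeasurable (fun x => abs_realSign_le _)
  have hposprod : ∀ᵐ w ∂(μH.prod μH), 0 < w.1 ∧ 0 < w.2 := by
    rw [ae_iff]
    refine measure_mono_null (t := ({x : ℝ | ¬ 0 < x} ×ˢ Set.univ) ∪
        (Set.univ ×ˢ {x : ℝ | ¬ 0 < x})) (fun w hw => ?_)
      (measure_union_null ?_ ?_)
    · simp only [Set.mem_setOf_eq, not_and_or] at hw
      rcases hw with h | h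
      · exact Set.mem_union_left _ (by simp [not_lt.mp h])
      · exact Set.mem_union_right _ (by simp [not_lt.mp h])
    · rw [Measure.prod_prod, hpos, zero_mul]
    · rw [Measure.prod_prod, hpos, mul_zero]
  calc kendallTau T₁ T₂
      = ∫ q : Ω × Ω, F (Prod.map φ φ q) ∂((ℙ : Measure Ω).prod ℙ) := by
        unfold kendallTau; rw [hint]
    _ = ∫ z, F z ∂((μH.prod (γ.prod γ)).prod (μH.prod (γ.prod γ))) := by
        rw [← integral_map (hφm.prodMap hφm).aemeasurable hFm.aestronglyMeasurable,
          ← Measure.map_prod_map _ _ hφm hφm, hφlaw]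
    _ = ∫ w, G w ∂((μH.prod μH).prod ((γ.prod γ).prod (γ.prod γ))) := by
        rw [show F = fun z => G (σmap z) from rfl,
          ← integral_map hσm.aemeasurable hGm.aestronglyMeasurable,
          (measurePreserving_reorder μH (γ.prod γ) μH (γ.prod γ)).map_eq]
    _ = ∫ w : ℝ × ℝ, (∫ y : (ℝ × ℝ) × (ℝ × ℝ), G (w, y) ∂((γ.prod γ).prod (γ.prod γ)))
          ∂(μH.prod μH) := integral_prod _ hGint
    _ = ∫ _w : ℝ × ℝ, (2 / π) * Real.arcsin ρ ∂(μH.prod μH) := by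
        refine integral_congr_ae ?_
        filter_upwards [hposprod] with w hw
        have ha : 0 < Real.sqrt w.1 := Real.sqrt_pos.mpr hw.1
        have hc : 0 < Real.sqrt w.2 := Real.sqrt_pos.mpr hw.2
        have hmid := mid_integral ρ hρ ha hc
        rw [show (fun y : (ℝ × ℝ) × (ℝ × ℝ) => G (w, y)) = fun y : (ℝ × ℝ) × (ℝ × ℝ) =>
          Real.sign ((Real.sqrt w.1 * y.1.1 - Real.sqrt w.2 * y.2.1) *
            (ρ * (Real.sqrt w.1 * y.1.1 - Real.sqrt w.2 * y.2.1) +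
              s * (Real.sqrt w.1 * y.1.2 - Real.sqrt w.2 * y.2.2)))
          from funext fun y => congrArg Real.sign (by ring)]
        exact hmid
    _ = (2 / π) * Real.arcsin ρ := by
        rw [integral_const]
        simp
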